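/- (T-operation) Let G be a finite graph, T ⊆ V(G), and x, y ∈ T with xy ∈ E(G). Let G₁ = G/xy be the graph obtained by contracting xy (keeping multiple edges, removing loops), with T₁ = (T ∖ {x,y}) ∪ {v_{xy}}. Then in model E₃ (each edge colored red/blue uniformly and independently; walks change color only at transversal vertices), for all u, v ∈ V(G) and each i ∈ {0,1}, the probability P_G(u₀ → v_i) equals the corresponding probability P_{G₁}(u₀ → v_i) (with u, v replaced by v_{xy} when appropriate). -/

import Mathlib

open scoped Classical

noncomputable section

/-- Indicator of a proposition, as a real number. -/
def pInd (P : Prop) : ℝ := if P then 1 else 0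

/-- A finite multigraph without loops on vertex set `V`. -/
structure Multigraph (V : Type) where
  E : Type
  fintypeE : Fintype E
  decEqE : DecidableEq E
  ends : E → Sym2 V
  not_isDiag : ∀ e, ¬ (ends e).IsDiag

attribute [instance] Multigraph.fintypeE Multigraph.decEqE

variable {V : Type}

/-- Colored presence graph of model E₃ on a multigraph: the copy of edge `e` lives in
the layer given by its color `c e`; vertical edges at `T`. -/
def Multigraph.ccGraph (M : Multigraph V) (c : M.E → Bool) (T : Set V) :
    SimpleGraph (V × Bool) where
  Adj a b := (a.2 = b.2 ∧ ∃ e, M.ends e = s(a.1, b.1) ∧ c e = a.2) ∨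
    (a.1 = b.1 ∧ a.2 ≠ b.2 ∧ a.1 ∈ T)
  symm := by
    constructor
    intro a b h
    rcases h with ⟨h1, e, he, hc⟩ | ⟨h1, h2, h3⟩
    · exact Or.inl ⟨h1.symm, e, by rwa [Sym2.eq_swap], by rwa [← h1]⟩
    · exact Or.inr ⟨h1.symm, Ne.symm h2, h1 ▸ h3⟩
  loopless := by
    constructor
    rintro a (⟨h1, e, he, hc⟩ | ⟨h1, h2, h3⟩)
    · exact M.not_isDiag e (by rw [he]; exact Sym2.mk_isDiag_iff.mpr rfl)
    · exact h2 rfl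

/-- Connection probability in model E₃^T on a multigraph. -/
def PE3M (M : Multigraph V) (T : Set V) (x y : V × Bool) : ℝ :=
  (∑ c : M.E → Bool, pInd ((M.ccGraph c T).Reachable x y)) / 2 ^ Fintype.card M.E

/-- Restriction of a multigraph to the edges satisfying `P` (edge deletion). -/
def Multigraph.restrict (M : Multigraph V) (P : M.E → Prop) : Multigraph V where
  E := {e : M.E // P e}
  fintypeE := Subtype.fintype _
  decEqE := inferInstance
  ends e := M.ends e.1
  not_isDiag e := M.not_isDiag e.1

/-- Contraction of the vertex `x` into the vertex `y`: every edge endpoint equal to `x`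
is renamed `y`, and the edges that become loops are removed. -/
def Multigraph.contract [DecidableEq V] (M : Multigraph V) (x y : V) : Multigraph V where
  E := {e : M.E // ¬ (Sym2.map (fun w => if w = x then y else w) (M.ends e)).IsDiag}
  fintypeE := Subtype.fintype _
  decEqE := inferInstance
  ends e := Sym2.map (fun w => if w = x then y else w) (M.ends e.1)
  not_isDiag e := e.2



namespace TOp

lemma reach_transfer {W W' : Type} {G : SimpleGraph W} {H : SimpleGraph W'} (φ : W → W')
    (h : ∀ a b, G.Adj a b → H.Reachable (φ a) (φ b)) {a b : W} (hr : G.Reachable a b) :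
    H.Reachable (φ a) (φ b) := by
  obtain ⟨w⟩ := hr
  induction w with
  | nil => exact SimpleGraph.Reachable.refl _
  | cons hadj _ ih => exact (h _ _ hadj).trans ih

variable [DecidableEq V] {M : Multigraph V} {T : Set V} {x y : V}

omit [DecidableEq V] in
/-- `x` and `y` are connected across all four layer copies. -/
lemma reach_xy (hx : x ∈ T) (hy : y ∈ T) (c : M.E → Bool)
    (e₀ : M.E) (he₀ : M.ends e₀ = s(x, y)) (b b' : Bool) :
    (M.ccGraph c T).Reachable (x, b) (y, b') := by
  have h1 : (M.ccGraph c T).Reachable (x, b) (x, c e₀) := by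
    by_cases h : b = c e₀
    · rw [h]
    · exact SimpleGraph.Adj.reachable (Or.inr ⟨rfl, by simpa using h, hx⟩)
  have h2 : (M.ccGraph c T).Adj (x, c e₀) (y, c e₀) := Or.inl ⟨rfl, e₀, he₀, rfl⟩
  have h3 : (M.ccGraph c T).Reachable (y, c e₀) (y, b') := by
    by_cases h : c e₀ = b'
    · rw [h]
    · exact SimpleGraph.Adj.reachable (Or.inr ⟨rfl, by simpa using h, hy⟩)
  exact (h1.trans h2.reachable).trans h3

/-- Moving back from the image of the contraction map is harmless. -/
lemma reach_back (hx : x ∈ T) (hy : y ∈ T) (c : M.E → Bool)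
    (e₀ : M.E) (he₀ : M.ends e₀ = s(x, y)) {p p₀ : V} (b : Bool)
    (h : (if p₀ = x then y else p₀) = p) :
    (M.ccGraph c T).Reachable (p, b) (p₀, b) := by
  by_cases hp : p₀ = x
  · subst hp
    rw [if_pos rfl] at h
    subst h
    exact (reach_xy hx hy c e₀ he₀ b b).symm
  · rw [if_neg hp] at h
    subst h
    exact SimpleGraph.Reachable.refl _

lemma adj_contract_to_reach (hx : x ∈ T) (hy : y ∈ T) (c : M.E → Bool)
    (e₀ : M.E) (he₀ : M.ends e₀ = s(x, y)) {s t : V × Bool}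
    (h : ((M.contract x y).ccGraph (fun e => c e.1)
        ((fun w => if w = x then y else w) '' T)).Adj s t) :
    (M.ccGraph c T).Reachable s t := by
  obtain ⟨p, b⟩ := s
  obtain ⟨q, b'⟩ := t
  rcases h with ⟨h1, e, he, hc⟩ | ⟨h1, h2, h3⟩
  · -- edge step
    simp only at h1 hc
    subst h1
    obtain ⟨a₁, a₂, hrep⟩ : ∃ a₁ a₂, M.ends e.1 = s(a₁, a₂) := by
      induction M.ends e.1 using Sym2.ind with | _ a₁ a₂ => exact ⟨a₁, a₂, rfl⟩
    have hmap : s((if a₁ = x then y else a₁ : V), (if a₂ = x then y else a₂ : V)) = s(p, q) := by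
      have := he
      rw [show (M.contract x y).ends e = Sym2.map (fun w => if w = x then y else w) (M.ends e.1)
        from rfl, hrep, Sym2.map_pair_eq] at this
      exact this
    have key : ∀ a₁ a₂ : V, M.ends e.1 = s(a₁, a₂) →
        (if a₁ = x then y else a₁) = p → (if a₂ = x then y else a₂) = q →
        (M.ccGraph c T).Reachable (p, b) (q, b) := by
      intro a₁ a₂ hrep h1 h2
      have r1 := reach_back hx hy c e₀ he₀ (p₀ := a₁) b h1
      have r2 : (M.ccGraph c T).Adj (a₁, b) (a₂, b) := Or.inl ⟨rfl, e.1, hrep, hc⟩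
      have r3 := reach_back hx hy c e₀ he₀ (p₀ := a₂) b h2
      exact (r1.trans r2.reachable).trans r3.symm
    rcases Sym2.eq_iff.mp hmap with ⟨hp, hq⟩ | ⟨hq, hp⟩
    · exact key a₁ a₂ hrep hp hq
    · exact key a₂ a₁ (by rwa [Sym2.eq_swap] at hrep) hp hq
  · -- vertical step
    simp only at h1 h2
    subst h1
    obtain ⟨t', ht', hft'⟩ := h3
    have hpT : p ∈ T := by
      by_cases ht'x : t' = x
      · subst ht'x
        simp only [if_pos rfl] at hft'
        exact hft' ▸ hy
      · simp only [if_neg ht'x] at hft'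
        exact hft' ▸ ht'
    exact (SimpleGraph.Adj.reachable (Or.inr ⟨rfl, h2, hpT⟩))

lemma adj_to_reach_contract (c : M.E → Bool) {s t : V × Bool}
    (h : (M.ccGraph c T).Adj s t) :
    ((M.contract x y).ccGraph (fun e => c e.1)
        ((fun w => if w = x then y else w) '' T)).Reachable
      ((if s.1 = x then y else s.1), s.2) ((if t.1 = x then y else t.1), t.2) := by
  rcases h with ⟨h1, e, he, hc⟩ | ⟨h1, h2, h3⟩
  · by_cases hd : (Sym2.map (fun w => if w = x then y else w) (M.ends e)).IsDiag
    · have : (if s.1 = x then y else s.1) = (if t.1 = x then y else t.1) := by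
        rw [he, Sym2.map_pair_eq] at hd
        exact Sym2.mk_isDiag_iff.mp hd
      rw [this, h1]
    · refine SimpleGraph.Adj.reachable (Or.inl ⟨h1, ⟨e, hd⟩, ?_, hc⟩)
      show Sym2.map (fun w => if w = x then y else w) (M.ends e) = _
      rw [he, Sym2.map_pair_eq]
  · exact SimpleGraph.Adj.reachable (Or.inr ⟨by rw [h1], h2, ⟨s.1, h3, rfl⟩⟩)

/-- Per-coloring reachability is preserved by the contraction. -/
lemma reach_iff (hx : x ∈ T) (hy : y ∈ T) (c : M.E → Bool)
    (e₀ : M.E) (he₀ : M.ends e₀ = s(x, y)) (u v : V) (i : Bool) :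
    (M.ccGraph c T).Reachable (u, false) (v, i) ↔
      ((M.contract x y).ccGraph (fun e => c e.1)
        ((fun w => if w = x then y else w) '' T)).Reachable
        ((if u = x then y else u), false) ((if v = x then y else v), i) := by
  constructor
  · intro hr
    exact reach_transfer (fun a => ((if a.1 = x then y else a.1), a.2))
      (fun a b hab => adj_to_reach_contract c hab) hr
  · intro hr
    have hr2 : (M.ccGraph c T).Reachable
        ((if u = x then y else u), false) ((if v = x then y else v), i) :=
      reach_transfer (G := (M.contract x y).ccGraph (fun e => c e.1)
          ((fun w => if w = x then y else w) '' T)) (H := M.ccGraph c T) id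
        (fun a b hab => adj_contract_to_reach hx hy c e₀ he₀ hab) hr
    exact ((reach_back hx hy c e₀ he₀ false rfl).symm.trans hr2).trans
      (reach_back hx hy c e₀ he₀ i rfl)

/-- Splitting colorings along a predicate on edges. -/
def splitE {α : Type} [Fintype α] [DecidableEq α] (P : α → Prop) [DecidablePred P] :
    (α → Bool) ≃ ({a // P a} → Bool) × ({a // ¬ P a} → Bool) where
  toFun c := ⟨fun a => c a.1, fun a => c a.1⟩
  invFun p a := if h : P a then p.1 ⟨a, h⟩ else p.2 ⟨a, h⟩
  left_inv c := by funext a; by_cases h : P a <;> simp [h]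
  right_inv p := by
    refine Prod.ext ?_ ?_ <;> funext a
    · simp [a.2]
    · simp [a.2]

lemma sum_res {α : Type} [Fintype α] [DecidableEq α] (P : α → Prop) [DecidablePred P] (g : ({a // P a} → Bool) → ℝ) :
    ∑ c : α → Bool, g (fun a => c a.1) =
      (2 : ℝ) ^ Fintype.card {a // ¬ P a} * ∑ c' : {a // P a} → Bool, g c' := by
  rw [Fintype.sum_equiv (splitE P) (fun c => g fun a => c a.1) (fun pr => g pr.1) (fun c => rfl),
    Fintype.sum_prod_type]
  simp only [Finset.sum_const, Finset.card_univ, nsmul_eq_mul, Fintype.card_fun,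
    Fintype.card_bool]
  rw [← Finset.mul_sum]
  push_cast
  ring

lemma card_split {α : Type} [Fintype α] [DecidableEq α] (P : α → Prop) [DecidablePred P] :
    Fintype.card α = Fintype.card {a // P a} + Fintype.card {a // ¬ P a} := by
  rw [Fintype.card_subtype_compl]
  have := Fintype.card_subtype_le P
  omega

end TOp

/-- T-operation: if `x, y ∈ T` are joined by an edge, then contracting that edge
(`x` is identified into `y = v_{xy}`, with `T₁ = (T ∖ {x,y}) ∪ {v_{xy}}`) preserves all
connection probabilities of model E₃. -/
theorem PE3M_T_operation [DecidableEq V] (M : Multigraph V) (T : Set V) (x y : V)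
    (hx : x ∈ T) (hy : y ∈ T) (hxy : x ≠ y) (hedge : ∃ e, M.ends e = s(x, y))
    (u v : V) (i : Bool) :
    PE3M M T (u, false) (v, i) =
      PE3M (M.contract x y) ((fun w => if w = x then y else w) '' T)
        ((fun w => if w = x then y else w) u, false)
        ((fun w => if w = x then y else w) v, i) := by
  classical
  obtain ⟨e₀, he₀⟩ := hedge
  have hsum : ∑ c : M.E → Bool,
      pInd ((M.ccGraph c T).Reachable (u, false) (v, i)) =
      (2 : ℝ) ^ Fintype.card
          {e : M.E // ¬ ¬ (Sym2.map (fun w => if w = x then y else w) (M.ends e)).IsDiag} *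
        ∑ c' : (M.contract x y).E → Bool,
          pInd (((M.contract x y).ccGraph c'
            ((fun w => if w = x then y else w) '' T)).Reachable
            ((if u = x then y else u), false) ((if v = x then y else v), i)) := by
    have h0 : ∑ c : M.E → Bool,
        pInd ((M.ccGraph c T).Reachable (u, false) (v, i)) =
        ∑ c : M.E → Bool,
          pInd (((M.contract x y).ccGraph (fun e => c e.1)
            ((fun w => if w = x then y else w) '' T)).Reachable
            ((if u = x then y else u), false) ((if v = x then y else v), i)) := by
      refine Finset.sum_congr rfl fun c _ => ?_
      unfold pInd
      rw [if_congr (TOp.reach_iff hx hy c e₀ he₀ u v i) rfl rfl]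
    rw [h0]
    have h1 := TOp.sum_res
      (fun e : M.E => ¬ (Sym2.map (fun w => if w = x then y else w) (M.ends e)).IsDiag)
      (fun c' => pInd (((M.contract x y).ccGraph c'
        ((fun w => if w = x then y else w) '' T)).Reachable
        ((if u = x then y else u), false) ((if v = x then y else v), i)))
    convert h1 using 2 <;> congr!
    exact congrArg (M.contract x y).ccGraph (eq_of_heq ‹_›)
  have hcard2 : Fintype.card M.E = Fintype.card (M.contract x y).E +
      Fintype.card
        {e : M.E // ¬ ¬ (Sym2.map (fun w => if w = x then y else w) (M.ends e)).IsDiag} := by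
    have h1 := TOp.card_split
      (fun e : M.E => ¬ (Sym2.map (fun w => if w = x then y else w) (M.ends e)).IsDiag)
    rw [h1]
    congr 1
  unfold PE3M
  rw [hsum, hcard2, pow_add]
  have h2 : (0 : ℝ) < 2 ^ Fintype.card
      {e : M.E // ¬ ¬ (Sym2.map (fun w => if w = x then y else w) (M.ends e)).IsDiag} := by
    positivity
  have h3 : (0 : ℝ) < 2 ^ Fintype.card (M.contract x y).E := by positivity
  field_simp
end
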